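/- Assume v² − 4f²m_l² > 0 and M² < M₂². Set L := (v² − 4f²m_l²)·M₂² / (8f⁴·(M₂² − M²)) (so L > 0). Then the parity-breaking point P = (l = 0, l′ = √L, δ = 0, δ′ = −v/(4f²), δbar = 0, δbar′ = −f·M·L/M₂²) is a critical point of V₁ (all six partial derivatives of V₁ vanish at P), and the value of the potential there is V₁(P) = −f²·(1 − M²/M₂²)·L². -/

import Mathlib

/-- The simplified tree-level Higgs potential of the minimal SUSY left-right model in
the limit of small gauge and bidoublet couplings, with all fields real:
`V₁(l, l', δ, δ', δbar, δbar') = m_l²(l'² + l²) + M₂²(δbar'² + δbar²) + f²(l'⁴ + l⁴)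
 + 4f²(l'²δ'² + l²δ²) + h²l'²l² + 2v(l'²δ' + l²δ) + 2fM(l'²δbar' + l²δbar)`. -/
noncomputable def V1 (mlsq M2 f M v h : ℝ) (l l' δ δ' δbar δbar' : ℝ) : ℝ :=
  mlsq * (l' ^ 2 + l ^ 2) + M2 ^ 2 * (δbar' ^ 2 + δbar ^ 2) + f ^ 2 * (l' ^ 4 + l ^ 4)
  + 4 * f ^ 2 * (l' ^ 2 * δ' ^ 2 + l ^ 2 * δ ^ 2) + h ^ 2 * l' ^ 2 * l ^ 2
  + 2 * v * (l' ^ 2 * δ' + l ^ 2 * δ) + 2 * f * M * (l' ^ 2 * δbar' + l ^ 2 * δbar)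
lemma deriv_quartic (a b e c : ℝ) (x : ℝ) :
    deriv (fun x : ℝ => a * x ^ 4 + b * x ^ 2 + e * x + c) x
      = 4 * a * x ^ 3 + 2 * b * x + e := by
  have h : HasDerivAt (fun x : ℝ => a * x ^ 4 + b * x ^ 2 + e * x + c)
      (4 * a * x ^ 3 + 2 * b * x + e) x := by
    have h1 := (hasDerivAt_pow 4 x).const_mul a
    have h2 := (hasDerivAt_pow 2 x).const_mul b
    have h3 := (hasDerivAt_id x).const_mul e
    have := ((h1.add h2).add h3).add_const c
    refine this.congr_deriv ?_
    push_cast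
    ring
  exact h.deriv

/-- The parity-breaking solution: under `v² − 4f²m_l² > 0` and `M² < M₂²`, with
`L = (v² − 4f²m_l²)M₂²/(8f⁴(M₂² − M²))`, the point
`(l, l', δ, δ', δbar, δbar') = (0, √L, 0, −v/(4f²), 0, −fML/M₂²)` is a critical point
of `V₁` and `V₁ = −f²(1 − M²/M₂²)L²` there. -/
theorem parity_breaking_solution (mlsq M2 f M v h L : ℝ)
    (hf : f ≠ 0) (hM2 : 0 < M2)
    (hpos : 0 < v ^ 2 - 4 * f ^ 2 * mlsq) (hMM : M ^ 2 < M2 ^ 2)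
    (hL : L = (v ^ 2 - 4 * f ^ 2 * mlsq) * M2 ^ 2 / (8 * f ^ 4 * (M2 ^ 2 - M ^ 2))) :
    0 < L ∧
    deriv (fun x => V1 mlsq M2 f M v h x (Real.sqrt L) 0 (-v / (4 * f ^ 2)) 0
      (-f * M * L / M2 ^ 2)) 0 = 0 ∧
    deriv (fun x => V1 mlsq M2 f M v h 0 x 0 (-v / (4 * f ^ 2)) 0
      (-f * M * L / M2 ^ 2)) (Real.sqrt L) = 0 ∧
    deriv (fun x => V1 mlsq M2 f M v h 0 (Real.sqrt L) x (-v / (4 * f ^ 2)) 0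
      (-f * M * L / M2 ^ 2)) 0 = 0 ∧
    deriv (fun x => V1 mlsq M2 f M v h 0 (Real.sqrt L) 0 x 0
      (-f * M * L / M2 ^ 2)) (-v / (4 * f ^ 2)) = 0 ∧
    deriv (fun x => V1 mlsq M2 f M v h 0 (Real.sqrt L) 0 (-v / (4 * f ^ 2)) x
      (-f * M * L / M2 ^ 2)) 0 = 0 ∧
    deriv (fun x => V1 mlsq M2 f M v h 0 (Real.sqrt L) 0 (-v / (4 * f ^ 2)) 0 x)
      (-f * M * L / M2 ^ 2) = 0 ∧
    V1 mlsq M2 f M v h 0 (Real.sqrt L) 0 (-v / (4 * f ^ 2)) 0 (-f * M * L / M2 ^ 2)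
      = -f ^ 2 * (1 - M ^ 2 / M2 ^ 2) * L ^ 2 := by

  have hden : 0 < M2 ^ 2 - M ^ 2 := by linarith
  have hf2 : (0:ℝ) < f ^ 2 := by positivity
  have hf4 : (0:ℝ) < f ^ 4 := by positivity
  have hM2sq : (0:ℝ) < M2 ^ 2 := by positivity
  have hLpos : 0 < L := by
    rw [hL]; positivity
  have hs : Real.sqrt L ^ 2 = L := Real.sq_sqrt hLpos.le
  have hLkey : mlsq - v ^ 2 / (4 * f ^ 2)
      + 2 * f ^ 2 * L * ((M2 ^ 2 - M ^ 2) / M2 ^ 2) = 0 := by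
    rw [hL]; field_simp; ring
  refine ⟨hLpos, ?_, ?_, ?_, ?_, ?_, ?_, ?_⟩
  · rw [show (fun x => V1 mlsq M2 f M v h x (Real.sqrt L) 0 (-v / (4 * f ^ 2)) 0
        (-f * M * L / M2 ^ 2)) = fun x : ℝ => f ^ 2 * x ^ 4
        + (mlsq + h ^ 2 * Real.sqrt L ^ 2) * x ^ 2 + 0 * x
        + (mlsq * Real.sqrt L ^ 2 + M2 ^ 2 * ((-f * M * L / M2 ^ 2) ^ 2)
          + f ^ 2 * Real.sqrt L ^ 4 + 4 * f ^ 2 * (Real.sqrt L ^ 2 * (-v / (4 * f ^ 2)) ^ 2)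
          + 2 * v * (Real.sqrt L ^ 2 * (-v / (4 * f ^ 2)))
          + 2 * f * M * (Real.sqrt L ^ 2 * (-f * M * L / M2 ^ 2))) from by
      funext x; simp only [V1]; ring]
    rw [deriv_quartic]; ring
  · rw [show (fun x => V1 mlsq M2 f M v h 0 x 0 (-v / (4 * f ^ 2)) 0
        (-f * M * L / M2 ^ 2)) = fun x : ℝ => f ^ 2 * x ^ 4
        + (mlsq + 4 * f ^ 2 * (-v / (4 * f ^ 2)) ^ 2 + 2 * v * (-v / (4 * f ^ 2))
          + 2 * f * M * (-f * M * L / M2 ^ 2)) * x ^ 2 + 0 * x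
        + M2 ^ 2 * (-f * M * L / M2 ^ 2) ^ 2 from by
      funext x; simp only [V1]; ring]
    rw [deriv_quartic]
    have h3 : Real.sqrt L ^ 3 = L * Real.sqrt L := by
      rw [pow_succ, hs]
    rw [h3]
    have expand : 4 * f ^ 2 * (L * Real.sqrt L)
        + 2 * (mlsq + 4 * f ^ 2 * (-v / (4 * f ^ 2)) ^ 2 + 2 * v * (-v / (4 * f ^ 2))
          + 2 * f * M * (-f * M * L / M2 ^ 2)) * Real.sqrt L + 0
        = 2 * Real.sqrt L * (mlsq - v ^ 2 / (4 * f ^ 2)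
          + 2 * f ^ 2 * L * ((M2 ^ 2 - M ^ 2) / M2 ^ 2)) := by
      field_simp; ring
    rw [expand, hLkey, mul_zero]
  · rw [show (fun x => V1 mlsq M2 f M v h 0 (Real.sqrt L) x (-v / (4 * f ^ 2)) 0
        (-f * M * L / M2 ^ 2)) = fun x : ℝ => 0 * x ^ 4 + 0 * x ^ 2 + 0 * x
        + (mlsq * Real.sqrt L ^ 2 + M2 ^ 2 * (-f * M * L / M2 ^ 2) ^ 2
          + f ^ 2 * Real.sqrt L ^ 4
          + 4 * f ^ 2 * (Real.sqrt L ^ 2 * (-v / (4 * f ^ 2)) ^ 2)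
          + 2 * v * (Real.sqrt L ^ 2 * (-v / (4 * f ^ 2)))
          + 2 * f * M * (Real.sqrt L ^ 2 * (-f * M * L / M2 ^ 2))) from by
      funext x; simp only [V1]; ring]
    rw [deriv_quartic]; ring
  · rw [show (fun x => V1 mlsq M2 f M v h 0 (Real.sqrt L) 0 x 0
        (-f * M * L / M2 ^ 2)) = fun x : ℝ => 0 * x ^ 4
        + (4 * f ^ 2 * Real.sqrt L ^ 2) * x ^ 2 + (2 * v * Real.sqrt L ^ 2) * x
        + (mlsq * Real.sqrt L ^ 2 + M2 ^ 2 * (-f * M * L / M2 ^ 2) ^ 2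
          + f ^ 2 * Real.sqrt L ^ 4
          + 2 * f * M * (Real.sqrt L ^ 2 * (-f * M * L / M2 ^ 2))) from by
      funext x; simp only [V1]; ring]
    rw [deriv_quartic, hs]; field_simp; ring
  · rw [show (fun x => V1 mlsq M2 f M v h 0 (Real.sqrt L) 0 (-v / (4 * f ^ 2)) x
        (-f * M * L / M2 ^ 2)) = fun x : ℝ => 0 * x ^ 4 + M2 ^ 2 * x ^ 2 + 0 * x
        + (mlsq * Real.sqrt L ^ 2 + M2 ^ 2 * (-f * M * L / M2 ^ 2) ^ 2
          + f ^ 2 * Real.sqrt L ^ 4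
          + 4 * f ^ 2 * (Real.sqrt L ^ 2 * (-v / (4 * f ^ 2)) ^ 2)
          + 2 * v * (Real.sqrt L ^ 2 * (-v / (4 * f ^ 2)))
          + 2 * f * M * (Real.sqrt L ^ 2 * (-f * M * L / M2 ^ 2))) from by
      funext x; simp only [V1]; ring]
    rw [deriv_quartic]; ring
  · rw [show (fun x => V1 mlsq M2 f M v h 0 (Real.sqrt L) 0 (-v / (4 * f ^ 2)) 0 x)
        = fun x : ℝ => 0 * x ^ 4 + M2 ^ 2 * x ^ 2 + (2 * f * M * Real.sqrt L ^ 2) * x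
        + (mlsq * Real.sqrt L ^ 2 + f ^ 2 * Real.sqrt L ^ 4
          + 4 * f ^ 2 * (Real.sqrt L ^ 2 * (-v / (4 * f ^ 2)) ^ 2)
          + 2 * v * (Real.sqrt L ^ 2 * (-v / (4 * f ^ 2)))) from by
      funext x; simp only [V1]; ring]
    rw [deriv_quartic, hs]; field_simp; ring
  · have h4 : Real.sqrt L ^ 4 = L ^ 2 := by
      rw [show (4:ℕ) = 2 * 2 from rfl, pow_mul, hs]
    simp only [V1, hs, h4]
    rw [hL]
    field_simp
    ring
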